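/- If X is a smooth Banach space of dimension at least 2, then X has no spear vectors. -/

import Mathlib

/-- A spear vector: `z ∈ S_X` with `‖z + 𝕋x‖ = 1 + ‖x‖` for every `x ∈ X`. -/
def IsSpear (𝕜 : Type*) {X : Type*} [RCLike 𝕜] [NormedAddCommGroup X]
    [NormedSpace 𝕜 X] (z : X) : Prop :=
  ‖z‖ = 1 ∧ ∀ x : X, sSup {r : ℝ | ∃ ω : 𝕜, ‖ω‖ = 1 ∧ r = ‖z + ω • x‖} = 1 + ‖x‖

/-- a smooth Banach space of dimension at least 2 (for each nonzero `x`
there is a unique norm-one functional `x*` with `x*(x) = ‖x‖`) has no spear vectors. -/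
theorem stmt7 {𝕜 X : Type*} [RCLike 𝕜] [NormedAddCommGroup X] [NormedSpace 𝕜 X]
    [CompleteSpace X]
    (hsmooth : ∀ x : X, x ≠ 0 →
      ∃! φ : StrongDual 𝕜 X, ‖φ‖ = 1 ∧ φ x = (‖x‖ : 𝕜))
    (hdim : 2 ≤ Module.rank 𝕜 X) :
    ∀ z : X, ¬ IsSpear 𝕜 z := by
  rintro z ⟨hz1, hsup⟩
  have hz0 : z ≠ 0 := fun h => by simp [h] at hz1
  obtain ⟨φ, ⟨hφn, hφz⟩, hφu⟩ := hsmooth z hz0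
  -- find a nonzero x in the kernel of φ
  have hker : ∃ x : X, x ≠ 0 ∧ φ x = 0 := by
    by_contra h
    push_neg at h
    have hinj : Function.Injective φ := by
      intro a b hab
      by_contra hne
      exact h (a - b) (sub_ne_zero.mpr hne) (by rw [map_sub, hab, sub_self])
    have h1 := LinearMap.lift_rank_le_of_injective (φ.toLinearMap) hinj
    rw [Module.rank_self, Cardinal.lift_one] at h1
    have h2 : Cardinal.lift.{_} (2 : Cardinal) ≤ Cardinal.lift.{_} (Module.rank 𝕜 X) :=
      Cardinal.lift_le.mpr hdim
    rw [Cardinal.lift_ofNat] at h2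
    have := h2.trans h1
    norm_num at this
  obtain ⟨x, hx0, hφx⟩ := hker
  -- the sup is attained on the compact circle
  have hsetc : {r : ℝ | ∃ ω : 𝕜, ‖ω‖ = 1 ∧ r = ‖z + ω • x‖}
      = (fun ω : 𝕜 => ‖z + ω • x‖) '' Metric.sphere 0 1 := by
    ext r
    simp only [Set.mem_setOf_eq, Set.mem_image, mem_sphere_zero_iff_norm]
    constructor
    · rintro ⟨ω, h1, h2⟩; exact ⟨ω, h1, h2.symm⟩
    · rintro ⟨ω, h1, h2⟩; exact ⟨ω, h1, h2.symm⟩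
  have hcont : Continuous fun ω : 𝕜 => ‖z + ω • x‖ := by continuity
  have hcpt := (isCompact_sphere (0 : 𝕜) 1).image hcont
  have hne : ((fun ω : 𝕜 => ‖z + ω • x‖) '' Metric.sphere 0 1).Nonempty :=
    ⟨_, ⟨1, by simp, rfl⟩⟩
  have hmem := hcpt.sSup_mem hne
  have heq : sSup ((fun ω : 𝕜 => ‖z + ω • x‖) '' Metric.sphere 0 1) = 1 + ‖x‖ := by
    rw [← hsetc]; exact hsup x
  rw [heq] at hmem
  obtain ⟨ω, hω, hωeq⟩ := hmem
  simp only at hωeq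
  rw [mem_sphere_zero_iff_norm] at hω
  have hxpos : 0 < ‖x‖ := norm_pos_iff.mpr hx0
  have hne0 : z + ω • x ≠ 0 := by
    intro h
    rw [h, norm_zero] at hωeq
    linarith
  obtain ⟨ψ, hψn, hψe⟩ := exists_dual_vector 𝕜 (z + ω • x) (norm_ne_zero_iff.mpr hne0)
  rw [hωeq] at hψe
  have hexp : ψ z + ω * ψ x = ((1 + ‖x‖ : ℝ) : 𝕜) := by
    rw [← hψe]; simp [map_add, map_smul, smul_eq_mul]
  have hre : RCLike.re (ψ z) + RCLike.re (ω * ψ x) = 1 + ‖x‖ := by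
    have := congrArg RCLike.re hexp
    simpa using this
  have h1 : RCLike.re (ψ z) ≤ 1 := by
    calc RCLike.re (ψ z) ≤ ‖ψ z‖ := RCLike.re_le_norm _
      _ ≤ ‖ψ‖ * ‖z‖ := ψ.le_opNorm z
      _ = 1 := by rw [hψn, hz1, one_mul]
  have h2 : RCLike.re (ω * ψ x) ≤ ‖x‖ := by
    calc RCLike.re (ω * ψ x) ≤ ‖ω * ψ x‖ := RCLike.re_le_norm _
      _ = ‖ψ x‖ := by rw [norm_mul, hω, one_mul]
      _ ≤ ‖ψ‖ * ‖x‖ := ψ.le_opNorm x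
      _ = ‖x‖ := by rw [hψn, one_mul]
  have hre1 : RCLike.re (ψ z) = 1 := by linarith
  have hψz1 : ψ z = 1 := by
    have hnle : ‖ψ z‖ ≤ 1 := by
      calc ‖ψ z‖ ≤ ‖ψ‖ * ‖z‖ := ψ.le_opNorm z
        _ = 1 := by rw [hψn, hz1, one_mul]
    have hsq : RCLike.re (ψ z) ^ 2 + RCLike.im (ψ z) ^ 2 = ‖ψ z‖ ^ 2 := by
      rw [← RCLike.normSq_eq_def', RCLike.normSq_apply]; ring
    have him : RCLike.im (ψ z) = 0 := by nlinarith [norm_nonneg (ψ z)]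
    apply RCLike.ext <;> simp [hre1, him]
  have hψφ : ψ = φ := hφu ψ ⟨hψn, by rw [hψz1, hz1]; norm_num⟩
  rw [hψφ, hφx, mul_zero, map_zero, hφz, hz1] at hre
  simp at hre
  exact hx0 hre
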